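/- Every element of the Clifford group Γ (invertible elements T with T C^1 T^{-1} ⊆ C^1) preserves each homogeneous subspace C^k under conjugation: for all k = 0,1,…,n, T C^k T^{-1} ⊆ C^k. Consequently Γ = ∩_{k=0}^n Γ^k. -/

import Mathlib

open CliffordAlgebra

noncomputable section

variable {n : ℕ} (Q : QuadraticForm ℝ (Fin n → ℝ))

/-- The standard generators `e_a` of the Clifford algebra. -/
def egen (a : Fin n) : CliffordAlgebra Q := ι Q (Pi.single a 1)

/-- The ordered product of generators indexed by a finite set. -/
def eProd (s : Finset (Fin n)) : CliffordAlgebra Q :=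
  ((s.sort (· ≤ ·)).map (egen Q)).prod

/-- The grade-`k` subspace `C^k`, spanned by the products of `k` distinct generators. -/
def gradeSubmodule (k : ℕ) : Submodule ℝ (CliffordAlgebra Q) :=
  Submodule.span ℝ {x | ∃ s : Finset (Fin n), s.card = k ∧ x = eProd Q s}

/-- The set `Z^× (C^{×(0)} ∪ C^{×(1)})` : invertible central elements times
invertible even or odd elements. -/
def Pset : Set (CliffordAlgebra Q) :=
  {T | ∃ W T₀ : CliffordAlgebra Q,
    W ∈ Subalgebra.center ℝ (CliffordAlgebra Q) ∧ IsUnit W ∧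
    (T₀ ∈ evenOdd Q 0 ∨ T₀ ∈ evenOdd Q 1) ∧ IsUnit T₀ ∧ T = W * T₀}

/-- `Q` is diagonal with entries `±1` in the standard basis (an orthonormal-type basis,
expressing nondegeneracy of `Q`). -/
def DiagQ : Prop :=
  (∀ a, Q (Pi.single a 1) = 1 ∨ Q (Pi.single a 1) = -1) ∧
  (∀ a b : Fin n, a ≠ b → QuadraticMap.polar Q (Pi.single a 1) (Pi.single b 1) = 0)

/-! ### Auxiliary lemmas -/

/-- Product of generators along a list. -/
def eL (l : List (Fin n)) : CliffordAlgebra Q := (l.map (egen Q)).prod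

section Aux

variable {Q}

lemma eL_append (l₁ l₂ : List (Fin n)) : eL Q (l₁ ++ l₂) = eL Q l₁ * eL Q l₂ := by
  simp [eL]

lemma eL_cons (a : Fin n) (l : List (Fin n)) : eL Q (a :: l) = egen Q a * eL Q l := by
  simp [eL]

lemma eProd_eq_eL (s : Finset (Fin n)) : eProd Q s = eL Q (s.sort (· ≤ ·)) := rfl

lemma eProd_empty : eProd Q ∅ = 1 := by simp [eProd, Finset.sort_empty]

lemma eProd_singleton (a : Fin n) : eProd Q {a} = egen Q a := by
  simp [eProd, Finset.sort_singleton]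

lemma eProd_mem (s : Finset (Fin n)) : eProd Q s ∈ gradeSubmodule Q s.card :=
  Submodule.subset_span ⟨s, rfl, rfl⟩

lemma egen_mem_grade1 (a : Fin n) : egen Q a ∈ gradeSubmodule Q 1 :=
  Submodule.subset_span ⟨{a}, by simp, (eProd_singleton a).symm⟩

lemma one_mem_grade0 : (1 : CliffordAlgebra Q) ∈ gradeSubmodule Q 0 := by
  simpa [eProd_empty] using eProd_mem (Q := Q) ∅

lemma egen_anticomm (hQ : DiagQ Q) {a b : Fin n} (h : a ≠ b) :
    egen Q a * egen Q b = -(egen Q b * egen Q a) := by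
  have h2 := CliffordAlgebra.ι_mul_ι_add_swap (Q := Q) (Pi.single a 1) (Pi.single b 1)
  rw [hQ.2 a b h, map_zero] at h2
  exact eq_neg_of_add_eq_zero_left h2

lemma egen_sq (a : Fin n) :
    egen Q a * egen Q a = algebraMap ℝ _ (Q (Pi.single a 1)) :=
  CliffordAlgebra.ι_sq_scalar Q _

/-- Moving an element through a list product of anticommuting elements. -/
lemma anticomm_list_prod {A : Type*} [Ring A] [Algebra ℝ A] (x : A) :
    ∀ l : List A, (∀ y ∈ l, x * y = -(y * x)) →
      x * l.prod = ((-1 : ℝ) ^ l.length) • (l.prod * x)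
  | [], _ => by simp
  | y :: l, h => by
    have hy := h y (List.mem_cons_self)
    have ih := anticomm_list_prod x l (fun z hz => h z (List.mem_cons_of_mem y hz))
    rw [List.prod_cons, List.length_cons]
    calc x * (y * l.prod) = (x * y) * l.prod := by rw [mul_assoc]
      _ = -(y * (x * l.prod)) := by rw [hy, neg_mul, mul_assoc]
      _ = -(y * (((-1 : ℝ) ^ l.length) • (l.prod * x))) := by rw [ih]
      _ = ((-1 : ℝ) ^ (l.length + 1)) • (y * l.prod * x) := by
          rw [mul_smul_comm, ← neg_smul, pow_succ, mul_neg_one, mul_assoc]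

lemma neg_one_pow_smul_cancel {A : Type*} [AddCommGroup A] [Module ℝ A] {k : ℕ} {x y : A}
    (h : x = ((-1 : ℝ) ^ k) • y) : y = ((-1 : ℝ) ^ k) • x := by
  rw [h, smul_smul, ← pow_add]
  rw [Even.neg_one_pow ⟨k, rfl⟩, one_smul]

lemma egen_mul_eL (hQ : DiagQ Q) (a : Fin n) (l : List (Fin n)) (h : a ∉ l) :
    egen Q a * eL Q l = ((-1 : ℝ) ^ l.length) • (eL Q l * egen Q a) := by
  have := anticomm_list_prod (egen Q a) (l.map (egen Q)) ?_
  · simpa [eL] using this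
  · rintro y hy
    obtain ⟨b, hb, rfl⟩ := List.mem_map.1 hy
    exact egen_anticomm hQ (fun hab => h (hab ▸ hb))

/-- Splitting the sorted list of `s` at an element `a ∈ s`. -/
lemma sort_split {a : Fin n} {s : Finset (Fin n)} (ha : a ∈ s) :
    ∃ l₁ l₂ : List (Fin n), a ∉ l₁ ∧ a ∉ l₂ ∧
      s.sort (· ≤ ·) = l₁ ++ a :: l₂ ∧ (s.erase a).sort (· ≤ ·) = l₁ ++ l₂ := by
  have hmem : a ∈ s.sort (· ≤ ·) := (Finset.mem_sort _).2 ha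
  obtain ⟨l₁, l₂, hsp⟩ := List.append_of_mem hmem
  have hnd : (s.sort (· ≤ ·)).Nodup := Finset.sort_nodup _ _
  rw [hsp, List.nodup_middle, List.nodup_cons] at hnd
  obtain ⟨hal, hnd2⟩ := hnd
  have h1 : a ∉ l₁ := fun h => hal (List.mem_append_left _ h)
  have h2 : a ∉ l₂ := fun h => hal (List.mem_append_right _ h)
  refine ⟨l₁, l₂, h1, h2, hsp, ?_⟩
  have hsub : List.Sublist (l₁ ++ l₂) (l₁ ++ a :: l₂) := (List.sublist_cons_self a l₂).append_left l₁
  have hsorted : (l₁ ++ l₂).Pairwise (· ≤ ·) := by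
    have := Finset.pairwise_sort s (· ≤ ·)
    rw [hsp] at this
    exact this.sublist hsub
  have hmemiff : ∀ b : Fin n, b ∈ s ↔ b ∈ l₁ ∨ b = a ∨ b ∈ l₂ := by
    intro b
    rw [← Finset.mem_sort (· ≤ ·), hsp]
    simp
  apply List.Perm.eq_of_pairwise' (Finset.pairwise_sort _ _) hsorted ?_
  apply List.perm_of_nodup_nodup_toFinset_eq (Finset.sort_nodup _ _) hnd2
  ext b
  simp only [List.mem_toFinset, Finset.mem_sort, Finset.mem_erase, List.mem_append]
  constructor
  · rintro ⟨hba, hbs⟩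
    rcases (hmemiff b).1 hbs with h | h | h
    · exact Or.inl h
    · exact absurd h hba
    · exact Or.inr h
  · rintro (h | h)
    · exact ⟨fun hba => h1 (hba ▸ h), (hmemiff b).2 (Or.inl h)⟩
    · exact ⟨fun hba => h2 (hba ▸ h), (hmemiff b).2 (Or.inr (Or.inr h))⟩

lemma egen_mul_eProd_not_mem (hQ : DiagQ Q) {a : Fin n} {s : Finset (Fin n)} (ha : a ∉ s) :
    egen Q a * eProd Q s ∈ gradeSubmodule Q (s.card + 1) ∧
      eProd Q s * egen Q a ∈ gradeSubmodule Q (s.card + 1) := by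
  obtain ⟨l₁, l₂, h1, h2, hsp, hes⟩ := sort_split (Finset.mem_insert_self a s)
  rw [Finset.erase_insert ha] at hes
  have e1 : eProd Q s = eL Q l₁ * eL Q l₂ := by rw [eProd_eq_eL, hes, eL_append]
  have e2 : eProd Q (insert a s) = eL Q l₁ * (egen Q a * eL Q l₂) := by
    rw [eProd_eq_eL, hsp, eL_append, eL_cons]
  have hcard : (insert a s).card = s.card + 1 := Finset.card_insert_of_notMem ha
  have hmem2 : eProd Q (insert a s) ∈ gradeSubmodule Q (s.card + 1) := by
    rw [← hcard]; exact eProd_mem _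
  constructor
  · have : egen Q a * eProd Q s = ((-1 : ℝ) ^ l₁.length) • eProd Q (insert a s) := by
      rw [e1, e2, ← mul_assoc, egen_mul_eL hQ a l₁ h1, smul_mul_assoc, mul_assoc]
    rw [this]
    exact Submodule.smul_mem _ _ hmem2
  · have hl2 : eL Q l₂ * egen Q a = ((-1 : ℝ) ^ l₂.length) • (egen Q a * eL Q l₂) :=
      neg_one_pow_smul_cancel (egen_mul_eL hQ a l₂ h2)
    have : eProd Q s * egen Q a = ((-1 : ℝ) ^ l₂.length) • eProd Q (insert a s) := by
      rw [e1, e2, mul_assoc, hl2, mul_smul_comm]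
    rw [this]
    exact Submodule.smul_mem _ _ hmem2

lemma egen_mul_eProd_mem_cancel (hQ : DiagQ Q) {a : Fin n} {s : Finset (Fin n)} (ha : a ∈ s) :
    egen Q a * eProd Q s + ((-1 : ℝ) ^ s.card) • (eProd Q s * egen Q a) = 0 := by
  obtain ⟨l₁, l₂, h1, h2, hsp, _⟩ := sort_split ha
  have hm : s.card = l₁.length + l₂.length + 1 := by
    have := Finset.length_sort (α := Fin n) (· ≤ ·) (s := s)
    rw [hsp] at this
    simp at this
    omega
  have e2 : eProd Q s = eL Q l₁ * (egen Q a * eL Q l₂) := by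
    rw [eProd_eq_eL, hsp, eL_append, eL_cons]
  set X : CliffordAlgebra Q := eL Q l₁ * (egen Q a * (egen Q a * eL Q l₂)) with hX
  have eleft : egen Q a * eProd Q s = ((-1 : ℝ) ^ l₁.length) • X := by
    rw [e2, ← mul_assoc, egen_mul_eL hQ a l₁ h1, smul_mul_assoc, hX, mul_assoc]
  have eright : eProd Q s * egen Q a = ((-1 : ℝ) ^ l₂.length) • X := by
    have hl2 : eL Q l₂ * egen Q a = ((-1 : ℝ) ^ l₂.length) • (egen Q a * eL Q l₂) :=
      neg_one_pow_smul_cancel (egen_mul_eL hQ a l₂ h2)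
    rw [e2, mul_assoc, mul_assoc, hl2, mul_smul_comm, mul_smul_comm, hX]
  rw [eleft, eright, smul_smul, ← pow_add]
  have hsign : (-1 : ℝ) ^ (s.card + l₂.length) = -((-1 : ℝ) ^ l₁.length) := by
    rw [show s.card + l₂.length = l₁.length + 1 + 2 * l₂.length by omega]
    rw [pow_add, pow_mul, neg_one_sq, one_pow, mul_one, pow_succ, mul_neg_one]
  rw [hsign, neg_smul, add_neg_cancel]

/-- The "wedge part": for `x ∈ C¹` and `M ∈ Cᵐ`, `xM + (-1)^m M x ∈ C^{m+1}`. -/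
lemma wedge_mem (hQ : DiagQ Q) {m : ℕ} {x M : CliffordAlgebra Q}
    (hx : x ∈ gradeSubmodule Q 1) (hM : M ∈ gradeSubmodule Q m) :
    x * M + ((-1 : ℝ) ^ m) • (M * x) ∈ gradeSubmodule Q (m + 1) := by
  have hM' : M ∈ Submodule.span ℝ {z | ∃ s : Finset (Fin n), s.card = m ∧ z = eProd Q s} := hM
  clear hM
  induction hM' using Submodule.span_induction with
  | mem M hMs =>
    obtain ⟨s, hcard, rfl⟩ := hMs
    subst hcard
    have hx' : x ∈ Submodule.span ℝ {z | ∃ t : Finset (Fin n), t.card = 1 ∧ z = eProd Q t} := hx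
    clear hx
    induction hx' using Submodule.span_induction with
    | mem x hxs =>
      obtain ⟨t, ht1, rfl⟩ := hxs
      obtain ⟨a, rfl⟩ := Finset.card_eq_one.1 ht1
      rw [eProd_singleton]
      by_cases ha : a ∈ s
      · rw [egen_mul_eProd_mem_cancel hQ ha]
        exact zero_mem _
      · exact add_mem (egen_mul_eProd_not_mem hQ ha).1
          (Submodule.smul_mem _ _ (egen_mul_eProd_not_mem hQ ha).2)
    | zero => simpa using zero_mem _
    | add x y hx hy ihx ihy =>
      have : (x + y) * eProd Q s + ((-1 : ℝ) ^ s.card) • (eProd Q s * (x + y)) =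
          (x * eProd Q s + ((-1 : ℝ) ^ s.card) • (eProd Q s * x)) +
          (y * eProd Q s + ((-1 : ℝ) ^ s.card) • (eProd Q s * y)) := by
        rw [add_mul, mul_add, smul_add]; abel
      rw [this]
      exact add_mem ihx ihy
    | smul r x hx ih =>
      have : (r • x) * eProd Q s + ((-1 : ℝ) ^ s.card) • (eProd Q s * (r • x)) =
          r • (x * eProd Q s + ((-1 : ℝ) ^ s.card) • (eProd Q s * x)) := by
        rw [smul_mul_assoc, mul_smul_comm, smul_add, smul_comm r]
      rw [this]
      exact Submodule.smul_mem _ _ ih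
  | zero => simpa using zero_mem _
  | add M N hMm hNm ihM ihN =>
    have : x * (M + N) + ((-1 : ℝ) ^ m) • ((M + N) * x) =
        (x * M + ((-1 : ℝ) ^ m) • (M * x)) + (x * N + ((-1 : ℝ) ^ m) • (N * x)) := by
      rw [mul_add, add_mul, smul_add]; abel
    rw [this]
    exact add_mem ihM ihN
  | smul r M hMm ih =>
    have : x * (r • M) + ((-1 : ℝ) ^ m) • ((r • M) * x) =
        r • (x * M + ((-1 : ℝ) ^ m) • (M * x)) := by
      rw [mul_smul_comm, smul_mul_assoc, smul_add, smul_comm r]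
    rw [this]
    exact Submodule.smul_mem _ _ ih

/-- A product of pairwise anticommuting elements of `C¹` lies in the corresponding grade. -/
lemma prod_mem_grade (hQ : DiagQ Q) :
    ∀ l : List (CliffordAlgebra Q),
      (∀ x ∈ l, x ∈ gradeSubmodule Q 1) →
      l.Pairwise (fun x y => x * y = -(y * x)) →
      l.prod ∈ gradeSubmodule Q l.length
  | [], _, _ => by simpa using one_mem_grade0
  | x :: l, h1, hp => by
    have hpc := List.pairwise_cons.1 hp
    have ih := prod_mem_grade hQ l (fun z hz => h1 z (List.mem_cons_of_mem x hz)) hpc.2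
    have hcomm := anticomm_list_prod x l hpc.1
    have hw := wedge_mem hQ (h1 x (List.mem_cons_self)) ih
    rw [← hcomm] at hw
    have heq : (x :: l).prod = (2⁻¹ : ℝ) • (x * l.prod + x * l.prod) := by
      rw [List.prod_cons, ← two_smul ℝ, smul_smul]
      norm_num
    rw [heq, List.length_cons]
    exact Submodule.smul_mem _ _ hw

lemma conjT_mul (T : (CliffordAlgebra Q)ˣ) (x y : CliffordAlgebra Q) :
    (↑T * x * ↑T⁻¹) * (↑T * y * ↑T⁻¹) = ↑T * (x * y) * ↑T⁻¹ := by
  have h : (↑T⁻¹ : CliffordAlgebra Q) * ↑T = 1 := T.inv_mul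
  calc (↑T * x * ↑T⁻¹) * (↑T * y * ↑T⁻¹)
      = ↑T * x * ((↑T⁻¹ * ↑T) * (y * ↑T⁻¹)) := by simp only [mul_assoc]
    _ = ↑T * (x * y) * ↑T⁻¹ := by simp only [h, one_mul, mul_assoc]

lemma conjT_list_prod (T : (CliffordAlgebra Q)ˣ) :
    ∀ l : List (CliffordAlgebra Q),
      ↑T * l.prod * ↑T⁻¹ = (l.map fun x => (↑T : CliffordAlgebra Q) * x * (↑T⁻¹ : CliffordAlgebra Q)).prod
  | [] => by simp
  | x :: l => by
    rw [List.map_cons, List.prod_cons, List.prod_cons, ← conjT_list_prod T l, ← conjT_mul]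

end Aux

/-- The Clifford group preserves every homogeneous subspace: `Γ = ⋂_k Γ^k`. -/
theorem stmt2 (hQ : DiagQ Q) (T : (CliffordAlgebra Q)ˣ) :
    (∀ U ∈ gradeSubmodule Q 1,
        (↑T : CliffordAlgebra Q) * U * (↑T⁻¹ : CliffordAlgebra Q) ∈ gradeSubmodule Q 1) ↔
      (∀ k, k ≤ n → ∀ U ∈ gradeSubmodule Q k,
        (↑T : CliffordAlgebra Q) * U * (↑T⁻¹ : CliffordAlgebra Q) ∈ gradeSubmodule Q k) := by
  constructor
  · intro h1 k _ U hU
    have hU' : U ∈ Submodule.span ℝ {z | ∃ s : Finset (Fin n), s.card = k ∧ z = eProd Q s} := hU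
    clear hU
    induction hU' using Submodule.span_induction with
    | mem U hUs =>
      obtain ⟨s, hcard, rfl⟩ := hUs
      subst hcard
      rw [show eProd Q s = ((s.sort (· ≤ ·)).map (egen Q)).prod from rfl,
        conjT_list_prod, List.map_map]
      have hlen : (List.map ((fun x => (↑T : CliffordAlgebra Q) * x * (↑T⁻¹ : CliffordAlgebra Q)) ∘ egen Q) (s.sort (· ≤ ·))).length
          = s.card := by simp
      rw [← hlen]
      apply prod_mem_grade hQ
      · intro x hx
        obtain ⟨a, _, rfl⟩ := List.mem_map.1 hx
        exact h1 _ (egen_mem_grade1 a)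
      · refine List.Pairwise.map _ ?_ (Finset.sort_nodup s _)
        intro a b hab
        show (↑T * egen Q a * ↑T⁻¹) * (↑T * egen Q b * ↑T⁻¹) =
          -((↑T * egen Q b * ↑T⁻¹) * (↑T * egen Q a * ↑T⁻¹))
        rw [conjT_mul, conjT_mul, egen_anticomm hQ hab, mul_neg, neg_mul]
    | zero => simpa using zero_mem _
    | add x y hx hy ihx ihy =>
      have : (↑T : CliffordAlgebra Q) * (x + y) * ↑T⁻¹ =
          ↑T * x * ↑T⁻¹ + ↑T * y * ↑T⁻¹ := by rw [mul_add, add_mul]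
      rw [this]
      exact add_mem ihx ihy
    | smul r x hx ih =>
      have : (↑T : CliffordAlgebra Q) * (r • x) * ↑T⁻¹ = r • (↑T * x * ↑T⁻¹) := by
        rw [mul_smul_comm, smul_mul_assoc]
      rw [this]
      exact Submodule.smul_mem _ _ ih
  · intro h U hU
    rcases Nat.eq_zero_or_pos n with hn | hn
    · subst hn
      have hset : {x : CliffordAlgebra Q | ∃ s : Finset (Fin 0), s.card = 1 ∧ x = eProd Q s}
          = ∅ := by
        ext x
        simp only [Set.mem_setOf_eq, Set.mem_empty_iff_false, iff_false, not_exists]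
        rintro s ⟨hs, -⟩
        have : s = ∅ := Finset.eq_empty_of_isEmpty s
        simp [this] at hs
      have hbot : gradeSubmodule Q 1 = ⊥ := by
        rw [gradeSubmodule, hset, Submodule.span_empty]
      rw [hbot, Submodule.mem_bot] at hU
      subst hU
      simpa using zero_mem _
    · exact h 1 hn U hU
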